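/- Let h : D → D be a holomorphic self-map of the unit disc and suppose ∑_{n=1}^∞ (1 - |h^n(z₀)|) < ∞ for some z₀ ∈ D. Then ∑_{n=1}^∞ (1 - |h^n(z)|) < ∞ for every z ∈ D. -/

import Mathlib

open Metric Set Function Complex

noncomputable def mob (a z : ℂ) : ℂ := (a - z) / (1 - (starRingEnd ℂ a) * z)

lemma key_id (a b : ℂ) :
    ‖1 - (starRingEnd ℂ a) * b‖ ^ 2 - ‖a - b‖ ^ 2 = (1 - ‖a‖ ^ 2) * (1 - ‖b‖ ^ 2) := by
  simp only [Complex.sq_norm, Complex.normSq_apply, Complex.sub_re,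
    Complex.sub_im, Complex.mul_re, Complex.mul_im, Complex.one_re, Complex.one_im,
    Complex.conj_re, Complex.conj_im]
  ring

lemma denom_pos {a b : ℂ} (ha : ‖a‖ < 1) (hb : ‖b‖ < 1) :
    0 < ‖1 - (starRingEnd ℂ a) * b‖ := by
  have h1 : ‖(starRingEnd ℂ a) * b‖ < 1 := by
    rw [norm_mul, RCLike.norm_conj]
    nlinarith [norm_nonneg a, norm_nonneg b]
  have := norm_sub_norm_le (1 : ℂ) ((starRingEnd ℂ a) * b)
  simp only [norm_one] at this
  linarith

lemma mob_lt_one {a b : ℂ} (ha : ‖a‖ < 1) (hb : ‖b‖ < 1) : ‖mob a b‖ < 1 := by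
  have hD := denom_pos ha hb
  have hk := key_id a b
  have hlt : ‖a - b‖ < ‖1 - (starRingEnd ℂ a) * b‖ := by
    nlinarith [norm_nonneg (a - b), norm_nonneg a, norm_nonneg b,
      mul_pos (by nlinarith [norm_nonneg a] : (0:ℝ) < 1 - ‖a‖ ^ 2)
        (by nlinarith [norm_nonneg b] : (0:ℝ) < 1 - ‖b‖ ^ 2)]
  rw [mob, norm_div, div_lt_one hD]
  exact hlt

lemma denom_ne {a b : ℂ} (ha : ‖a‖ < 1) (hb : ‖b‖ < 1) :
    (1 : ℂ) - (starRingEnd ℂ a) * b ≠ 0 := by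
  intro h0
  have := denom_pos ha hb
  rw [h0] at this
  simp at this

lemma mob_invol {a b : ℂ} (ha : ‖a‖ < 1) (hb : ‖b‖ < 1) : mob a (mob a b) = b := by
  have hD := denom_ne ha hb
  have hN : (1 : ℂ) - (starRingEnd ℂ a) * a ≠ 0 := denom_ne ha ha
  have h2 : (1 : ℂ) - (starRingEnd ℂ a) * mob a b
      = (1 - (starRingEnd ℂ a) * a) / (1 - (starRingEnd ℂ a) * b) := by
    rw [mob]; field_simp; ring
  rw [show mob a (mob a b) = (a - mob a b) / (1 - (starRingEnd ℂ a) * mob a b) from rfl,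
    h2, mob]
  rw [div_eq_iff (div_ne_zero hN hD)]
  have hD' : (1:ℂ) - b * (starRingEnd ℂ a) ≠ 0 := by rwa [mul_comm]
  field_simp
  ring

lemma mob_diffOn (a : ℂ) (ha : ‖a‖ < 1) : DifferentiableOn ℂ (mob a) (ball 0 1) := by
  apply DifferentiableOn.div
  · exact (differentiable_const a |>.sub differentiable_id).differentiableOn
  · exact ((differentiable_const (1:ℂ)).sub ((differentiable_const _).mul differentiable_id)).differentiableOn
  · intro z hz
    exact denom_ne ha (mem_ball_zero_iff.mp hz)

lemma mob_mapsTo {a : ℂ} (ha : ‖a‖ < 1) : MapsTo (mob a) (ball 0 1) (ball 0 1) := by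
  intro z hz
  rw [mem_ball_zero_iff] at *
  exact mob_lt_one ha hz

lemma mob_self (a : ℂ) : mob a a = 0 := by simp [mob]

lemma mob_zero (a : ℂ) : mob a 0 = a := by simp [mob]

lemma schwarz_pick {f : ℂ → ℂ} (hd : DifferentiableOn ℂ f (ball 0 1))
    (hm : MapsTo f (ball 0 1) (ball 0 1)) {a z : ℂ} (ha : ‖a‖ < 1) (hz : ‖z‖ < 1) :
    ‖mob (f a) (f z)‖ ≤ ‖mob a z‖ := by
  have ha' : a ∈ ball (0 : ℂ) 1 := mem_ball_zero_iff.mpr ha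
  have hz' : z ∈ ball (0 : ℂ) 1 := mem_ball_zero_iff.mpr hz
  have hfa : ‖f a‖ < 1 := mem_ball_zero_iff.mp (hm ha')
  set g : ℂ → ℂ := fun w => mob (f a) (f (mob a w)) with hg
  have hgd : DifferentiableOn ℂ g (ball 0 1) := by
    apply ((mob_diffOn (f a) hfa).comp (hd.comp (mob_diffOn a ha) (mob_mapsTo ha))
      (hm.comp (mob_mapsTo ha)))
  have hgm : MapsTo g (ball 0 1) (ball 0 1) := by
    intro w hw
    exact (mob_mapsTo hfa) (hm ((mob_mapsTo ha) hw))
  have hg0 : g 0 = 0 := by rw [hg]; simp [mob_zero, mob_self]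
  have key := Complex.norm_le_norm_of_mapsTo_ball hgd (hgm.mono_right ball_subset_closedBall) hg0
    (z := mob a z) (by simpa using mob_lt_one ha hz)
  have : g (mob a z) = mob (f a) (f z) := by rw [hg]; simp [mob_invol ha hz]
  rw [this] at key
  simpa using key

lemma comp_lemma {a b : ℂ} {r : ℝ} (ha : ‖a‖ < 1) (hb : ‖b‖ < 1) (hr : r < 1)
    (hdist : ‖mob b a‖ ≤ r) : 1 - ‖a‖ ≤ (1 + r) / (1 - r) * (1 - ‖b‖) := by
  have hD := denom_pos hb ha
  have hk := key_id b a
  have hr0 : 0 ≤ r := le_trans (norm_nonneg _) hdist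
  have hd' : ‖b - a‖ ≤ r * ‖1 - (starRingEnd ℂ b) * a‖ := by
    have := hdist
    rw [mob, norm_div, div_le_iff₀ hD] at this
    exact this
  -- (‖b‖ - ‖a‖) * D ≤ ‖b - a‖ * (1 - ‖a‖‖b‖)
  have hsq : (‖b‖ - ‖a‖) ^ 2 * ‖1 - (starRingEnd ℂ b) * a‖ ^ 2
      ≤ ‖b - a‖ ^ 2 * (1 - ‖a‖ * ‖b‖) ^ 2 := by
    have hP : (0:ℝ) ≤ (1 - ‖b‖ ^ 2) * (1 - ‖a‖ ^ 2) := by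
      apply mul_nonneg <;> nlinarith [norm_nonneg a, norm_nonneg b]
    have hst : (‖b‖ - ‖a‖) ^ 2 ≤ ‖b - a‖ ^ 2 := by
      have h1 : |‖b‖ - ‖a‖| ≤ ‖b - a‖ := abs_norm_sub_norm_le b a
      nlinarith [abs_nonneg (‖b‖ - ‖a‖), le_abs_self (‖b‖ - ‖a‖), neg_abs_le (‖b‖ - ‖a‖)]
    have hid2 : (1 - ‖a‖ * ‖b‖) ^ 2 = (‖b‖ - ‖a‖) ^ 2 + (1 - ‖b‖ ^ 2) * (1 - ‖a‖ ^ 2) := by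
      ring
    nlinarith [hk, hP, hst]
  have hlin : (‖b‖ - ‖a‖) * ‖1 - (starRingEnd ℂ b) * a‖
      ≤ ‖b - a‖ * (1 - ‖a‖ * ‖b‖) := by
    have hy : (0:ℝ) ≤ ‖b - a‖ * (1 - ‖a‖ * ‖b‖) := by
      apply mul_nonneg (norm_nonneg _)
      nlinarith [norm_nonneg a, norm_nonneg b]
    nlinarith [hsq, hy]
  have hstep : ‖b‖ - ‖a‖ ≤ r * (1 - ‖a‖ * ‖b‖) := by
    have h1 : (‖b‖ - ‖a‖) * ‖1 - (starRingEnd ℂ b) * a‖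
        ≤ r * ‖1 - (starRingEnd ℂ b) * a‖ * (1 - ‖a‖ * ‖b‖) := by
      refine hlin.trans ?_
      apply mul_le_mul_of_nonneg_right hd'
      nlinarith [norm_nonneg a, norm_nonneg b]
    have h2 : (‖b‖ - ‖a‖) * ‖1 - (starRingEnd ℂ b) * a‖
        ≤ (r * (1 - ‖a‖ * ‖b‖)) * ‖1 - (starRingEnd ℂ b) * a‖ := h1.trans_eq (by ring)
    exact le_of_mul_le_mul_right h2 hD
  rw [div_mul_eq_mul_div, le_div_iff₀ (by linarith)]
  nlinarith [hstep, mul_nonneg hr0 (mul_nonneg (by linarith : (0:ℝ) ≤ 1 - ‖a‖)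
    (by linarith : (0:ℝ) ≤ 1 - ‖b‖))]

theorem stmt19 (h : ℂ → ℂ) (hd : DifferentiableOn ℂ h (Metric.ball 0 1))
    (hm : Set.MapsTo h (Metric.ball 0 1) (Metric.ball 0 1))
    (z₀ : ℂ) (hz₀ : z₀ ∈ Metric.ball (0 : ℂ) 1)
    (hsum : Summable fun n : ℕ => 1 - ‖h^[n] z₀‖) :
    ∀ z ∈ Metric.ball (0 : ℂ) 1, Summable fun n : ℕ => 1 - ‖h^[n] z‖ := by
  intro z hz
  have hz₀' : ‖z₀‖ < 1 := mem_ball_zero_iff.mp hz₀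
  have hz' : ‖z‖ < 1 := mem_ball_zero_iff.mp hz
  have hiter : ∀ n : ℕ, ‖h^[n] z₀‖ < 1 ∧ ‖h^[n] z‖ < 1 := fun n =>
    ⟨mem_ball_zero_iff.mp (hm.iterate n hz₀), mem_ball_zero_iff.mp (hm.iterate n hz)⟩
  set r : ℝ := ‖mob z₀ z‖ with hrdef
  have hr1 : r < 1 := mob_lt_one hz₀' hz'
  have hdn : ∀ n : ℕ, ‖mob (h^[n] z₀) (h^[n] z)‖ ≤ r := by
    intro n
    induction n with
    | zero => simp only [Function.iterate_zero_apply]; exact le_of_eq hrdef.symm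
    | succ n ih =>
      rw [Function.iterate_succ_apply', Function.iterate_succ_apply']
      exact (schwarz_pick hd hm (hiter n).1 (hiter n).2).trans ih
  apply Summable.of_nonneg_of_le (f := fun n => (1 + r) / (1 - r) * (1 - ‖h^[n] z₀‖))
  · intro n
    linarith [(hiter n).2]
  · intro n
    exact comp_lemma (hiter n).2 (hiter n).1 hr1 (hdn n)
  · exact hsum.mul_left _
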